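/- (Data-driven trajectory representation, existence.) Let (A, B, C) be a discrete-time LTI system with state dimension ns such that the pair (A, B) is controllable. Let (u^d, y^d) be a trajectory of length T of the system, let T_ini ≥ 0 and N ≥ 1 be integers, set L = T_ini + N, and assume that the input data u^d is persistently exciting of order L + ns. Then for every trajectory (u, y) of length L of the system there exists a vector g ∈ ℝ^{T−L+1} such that H_L(u^d) g equals the stacked vector of u and H_L(y^d) g equals the stacked vector of y. -/

import Mathlib

open Matrix

/-- `(u, y)` is a trajectory of length `L` of the discrete-time LTI system
`(A, B, C)`: there is a state sequence `x` with `x(k+1) = A x(k) + B u(k)` and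
`y(k) = C x(k)` for all `0 ≤ k ≤ L−1`. -/
def IsTrajectory {ns q p : ℕ} (A : Matrix (Fin ns) (Fin ns) ℝ)
    (B : Matrix (Fin ns) (Fin q) ℝ) (C : Matrix (Fin p) (Fin ns) ℝ)
    (L : ℕ) (u : ℕ → Fin q → ℝ) (y : ℕ → Fin p → ℝ) : Prop :=
  ∃ x : ℕ → Fin ns → ℝ,
    ∀ k < L, x (k + 1) = A.mulVec (x k) + B.mulVec (u k) ∧ y k = C.mulVec (x k)

/-- The block Hankel matrix `H_L(ω) ∈ ℝ^{qL×(T−L+1)}` of depth `L` of a signal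
`ω : {0,…,T−1} → ℝ^q`: its `((i,a), j)` entry is `ω(i+j)(a)`. -/
def hankelMat {q : ℕ} (L T : ℕ) (ω : ℕ → Fin q → ℝ) :
    Matrix (Fin L × Fin q) (Fin (T - L + 1)) ℝ :=
  Matrix.of fun ia j => ω ((ia.1 : ℕ) + (j : ℕ)) ia.2

/-- The controllability matrix `[B, AB, …, A^{ns−1}B]` of a pair `(A, B)`. -/
noncomputable def ctrbMat {ns q : ℕ} (A : Matrix (Fin ns) (Fin ns) ℝ)
    (B : Matrix (Fin ns) (Fin q) ℝ) : Matrix (Fin ns) (Fin ns × Fin q) ℝ :=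
  Matrix.of fun r kj => (A ^ (kj.1 : ℕ) * B) r kj.2

open Finset

def stSeq {ns q : ℕ} (A : Matrix (Fin ns) (Fin ns) ℝ) (B : Matrix (Fin ns) (Fin q) ℝ)
    (x0 : Fin ns → ℝ) (u : ℕ → Fin q → ℝ) : ℕ → Fin ns → ℝ
  | 0 => x0
  | (k+1) => A.mulVec (stSeq A B x0 u k) + B.mulVec (u k)

lemma stSeq_congr {ns q : ℕ} (A : Matrix (Fin ns) (Fin ns) ℝ) (B : Matrix (Fin ns) (Fin q) ℝ)
    (x0 : Fin ns → ℝ) (u u' : ℕ → Fin q → ℝ) (k : ℕ) (h : ∀ i < k, u i = u' i) :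
    stSeq A B x0 u k = stSeq A B x0 u' k := by
  induction k with
  | zero => rfl
  | succ k ih =>
    simp only [stSeq, ih (fun i hi => h i (by omega)), h k (by omega)]

lemma stSeq_of_traj {ns q : ℕ} (A : Matrix (Fin ns) (Fin ns) ℝ) (B : Matrix (Fin ns) (Fin q) ℝ)
    (L : ℕ) (x : ℕ → Fin ns → ℝ) (u : ℕ → Fin q → ℝ)
    (hx : ∀ k < L, x (k+1) = A.mulVec (x k) + B.mulVec (u k))
    (j k : ℕ) (hk : j + k ≤ L) :
    x (j + k) = stSeq A B (x j) (fun i => u (j + i)) k := by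
  induction k with
  | zero => rfl
  | succ k ih =>
    have : j + (k+1) = (j+k) + 1 := by omega
    rw [this, hx (j+k) (by omega), ih (by omega)]
    rfl

lemma stSeq_linear {ns q : ℕ} (A : Matrix (Fin ns) (Fin ns) ℝ) (B : Matrix (Fin ns) (Fin q) ℝ)
    {ι : Type*} (s : Finset ι) (g : ι → ℝ) (x0 : ι → Fin ns → ℝ) (u : ι → ℕ → Fin q → ℝ)
    (k : ℕ) :
    stSeq A B (∑ j ∈ s, g j • x0 j) (fun t => ∑ j ∈ s, g j • u j t) k
      = ∑ j ∈ s, g j • stSeq A B (x0 j) (u j) k := by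
  induction k with
  | zero => rfl
  | succ k ih =>
    show A.mulVec _ + B.mulVec _ = _
    rw [ih]
    have hA : A.mulVec (∑ j ∈ s, g j • stSeq A B (x0 j) (u j) k)
        = ∑ j ∈ s, g j • A.mulVec (stSeq A B (x0 j) (u j) k) := by
      rw [show A.mulVec (∑ j ∈ s, g j • stSeq A B (x0 j) (u j) k)
          = A.mulVecLin (∑ j ∈ s, g j • stSeq A B (x0 j) (u j) k) from rfl]
      rw [map_sum]
      simp [Matrix.mulVecLin]
    have hB : B.mulVec (∑ j ∈ s, g j • u j k)
        = ∑ j ∈ s, g j • B.mulVec (u j k) := by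
      rw [show B.mulVec (∑ j ∈ s, g j • u j k)
          = B.mulVecLin (∑ j ∈ s, g j • u j k) from rfl]
      rw [map_sum]
      simp [Matrix.mulVecLin]
    rw [hA, hB, ← Finset.sum_add_distrib]
    apply Finset.sum_congr rfl
    intro j _
    rw [← smul_add]
    rfl

lemma stSeq_unfold {ns q : ℕ} (A : Matrix (Fin ns) (Fin ns) ℝ) (B : Matrix (Fin ns) (Fin q) ℝ)
    (x0 : Fin ns → ℝ) (u : ℕ → Fin q → ℝ) (k : ℕ) :
    stSeq A B x0 u k = (A ^ k).mulVec x0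
      + ∑ i ∈ range k, ((A ^ (k - 1 - i)) * B).mulVec (u i) := by
  induction k with
  | zero => simp [stSeq, Matrix.one_mulVec]
  | succ k ih =>
    show A.mulVec (stSeq A B x0 u k) + B.mulVec (u k) = _
    rw [ih, Matrix.mulVec_add]
    have h1 : A.mulVec ((A ^ k).mulVec x0) = (A ^ (k+1)).mulVec x0 := by
      rw [Matrix.mulVec_mulVec, ← pow_succ']
    have h2 : A.mulVec (∑ i ∈ range k, ((A ^ (k - 1 - i)) * B).mulVec (u i))
        = ∑ i ∈ range k, ((A ^ (k + 1 - 1 - i)) * B).mulVec (u i) := by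
      rw [show A.mulVec (∑ i ∈ range k, ((A ^ (k - 1 - i)) * B).mulVec (u i))
          = A.mulVecLin (∑ i ∈ range k, ((A ^ (k - 1 - i)) * B).mulVec (u i)) from rfl,
        map_sum]
      apply Finset.sum_congr rfl
      intro i hi
      simp only [Finset.mem_range] at hi
      show A.mulVec (((A ^ (k - 1 - i)) * B).mulVec (u i)) = _
      rw [Matrix.mulVec_mulVec, ← Matrix.mul_assoc, ← pow_succ']
      have : k - 1 - i + 1 = k + 1 - 1 - i := by omega
      rw [this]
    have h3 : B.mulVec (u k) = ((A ^ (k + 1 - 1 - k)) * B).mulVec (u k) := by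
      have : k + 1 - 1 - k = 0 := by omega
      rw [this, pow_zero, Matrix.one_mul]
    rw [h1, h2, h3, add_assoc, ← Finset.sum_range_succ
      (fun i => ((A ^ (k + 1 - 1 - i)) * B).mulVec (u i)) k]

lemma rank_eq_card_of_leftker {m n : Type*} [Fintype m] [Fintype n] [DecidableEq m]
    (M : Matrix m n ℝ) (h : ∀ v : m → ℝ, v ᵥ* M = 0 → v = 0) :
    M.rank = Fintype.card m := by
  have h1 : LinearMap.ker (Mᵀ.mulVecLin) = ⊥ := by
    rw [LinearMap.ker_eq_bot']
    intro v hv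
    exact h v (by rw [← Matrix.mulVec_transpose]; exact hv)
  have h2 := LinearMap.finrank_range_add_finrank_ker (Mᵀ.mulVecLin)
  rw [h1] at h2
  simp [Module.finrank_fintype_fun_eq_card] at h2
  have : Mᵀ.rank = Fintype.card m := by
    rw [Matrix.rank]; omega
  rw [← Matrix.rank_transpose]; exact this

lemma surjective_mulVec_of_leftker {m n : Type*} [Fintype m] [Fintype n] [DecidableEq m]
    (M : Matrix m n ℝ) (h : ∀ v : m → ℝ, v ᵥ* M = 0 → v = 0) :
    Function.Surjective M.mulVec := by
  have hr := rank_eq_card_of_leftker M h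
  have : LinearMap.range M.mulVecLin = ⊤ := by
    apply Submodule.eq_top_of_finrank_eq
    rw [Module.finrank_fintype_fun_eq_card]
    exact hr
  intro b
  obtain ⟨g, hg⟩ := (LinearMap.range_eq_top.mp this) b
  exact ⟨g, hg⟩

lemma leftker_of_rank_eq_card {m n : Type*} [Fintype m] [Fintype n] [DecidableEq m]
    (M : Matrix m n ℝ) (h : M.rank = Fintype.card m) :
    ∀ v : m → ℝ, v ᵥ* M = 0 → v = 0 := by
  intro v hv
  have h2 := LinearMap.finrank_range_add_finrank_ker (Mᵀ.mulVecLin)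
  have hrT : Mᵀ.rank = Fintype.card m := by rw [Matrix.rank_transpose]; exact h
  rw [Matrix.rank] at hrT
  rw [hrT, Module.finrank_fintype_fun_eq_card] at h2
  have hker : LinearMap.ker (Mᵀ.mulVecLin) = ⊥ := by
    rw [← Submodule.finrank_eq_zero]; omega
  have : Mᵀ.mulVecLin v = 0 := by
    show Mᵀ.mulVec v = 0
    rw [Matrix.mulVec_transpose]; exact hv
  exact (LinearMap.ker_eq_bot'.mp hker) v this

lemma mulVec_sum' {m n ι : Type*} [Fintype n] (s : Finset ι) (M : Matrix m n ℝ)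
    (g : ι → ℝ) (v : ι → n → ℝ) :
    M.mulVec (∑ i ∈ s, g i • v i) = ∑ i ∈ s, g i • M.mulVec (v i) := by
  rw [show M.mulVec (∑ i ∈ s, g i • v i) = M.mulVecLin (∑ i ∈ s, g i • v i) from rfl,
    map_sum]
  simp [Matrix.mulVecLin]


lemma sum_dotProduct' {ι m : Type*} [Fintype m] (s : Finset ι) (v : ι → m → ℝ) (w : m → ℝ) :
    (∑ i ∈ s, v i) ⬝ᵥ w = ∑ i ∈ s, v i ⬝ᵥ w := by
  simp only [dotProduct, Finset.sum_apply, Finset.sum_mul]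
  rw [Finset.sum_comm]

lemma dotProduct_sum' {ι m : Type*} [Fintype m] (s : Finset ι) (v : m → ℝ) (w : ι → m → ℝ) :
    v ⬝ᵥ (∑ i ∈ s, w i) = ∑ i ∈ s, v ⬝ᵥ w i := by
  simp only [dotProduct, Finset.sum_apply, Finset.mul_sum]
  rw [Finset.sum_comm]

lemma sum_vecMul' {ι m n : Type*} [Fintype m] [Fintype n] (s : Finset ι)
    (v : ι → m → ℝ) (M : Matrix m n ℝ) :
    (∑ i ∈ s, v i) ᵥ* M = ∑ i ∈ s, (v i) ᵥ* M := by
  funext j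
  simp only [Matrix.vecMul, dotProduct, Finset.sum_apply, Finset.sum_mul]
  rw [Finset.sum_comm]

lemma kernel_lemma {ns q L T : ℕ} (A : Matrix (Fin ns) (Fin ns) ℝ)
    (B : Matrix (Fin ns) (Fin q) ℝ)
    (hctrb : (ctrbMat A B).rank = ns)
    (hL : 1 ≤ L) (hT : L + ns ≤ T)
    (ud : ℕ → Fin q → ℝ) (xd : ℕ → Fin ns → ℝ)
    (hxdshift : ∀ j δ, j + δ ≤ T → ∀ β : Fin ns → ℝ,
      β ⬝ᵥ xd (j + δ) = (β ᵥ* (A ^ δ)) ⬝ᵥ xd j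
        + ∑ i ∈ range δ, (β ᵥ* ((A ^ (δ - 1 - i)) * B)) ⬝ᵥ ud (j + i))
    (hPE : (hankelMat (L + ns) T ud).rank = q * (L + ns))
    (ηe : ℕ → Fin q → ℝ) (hηe : ∀ m, L ≤ m → ηe m = 0)
    (β : Fin ns → ℝ)
    (hrel : ∀ j, j ≤ T - L →
      (∑ k ∈ range L, ηe k ⬝ᵥ ud (k + j)) + β ⬝ᵥ xd j = 0) :
    (∀ m, ηe m = 0) ∧ β = 0 := by
  classical
  -- the coefficients α killing the powers of A applied to β
  have hnotli : ¬ LinearIndependent ℝ (fun δ : Fin (ns+1) => β ᵥ* (A ^ (δ : ℕ))) := by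
    intro h
    have := h.fintype_card_le_finrank
    simp [Module.finrank_fintype_fun_eq_card] at this
  obtain ⟨α, hαsum, i0, hi0⟩ := Fintype.not_linearIndependent_iff.mp hnotli
  set αe : ℕ → ℝ := fun δ => if h : δ < ns + 1 then α ⟨δ, h⟩ else 0 with hαe
  have hαrel : ∑ δ ∈ range (ns+1), αe δ • (β ᵥ* (A ^ δ)) = 0 := by
    rw [← Fin.sum_univ_eq_sum_range (fun δ => αe δ • (β ᵥ* (A ^ δ))) (ns+1)]
    rw [← hαsum]
    apply Finset.sum_congr rfl
    intro i _
    simp [hαe, i.isLt]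
    intro h; have := i.isLt; omega
  set dS : ℕ := Nat.findGreatest (fun δ => αe δ ≠ 0) ns with hdS
  have hi0le : (i0 : ℕ) ≤ ns := by omega
  have hi0ne : αe (i0 : ℕ) ≠ 0 := by simpa [hαe, i0.isLt, hi0le] using hi0
  have hd0 : αe dS ≠ 0 := Nat.findGreatest_spec (P := fun δ => αe δ ≠ 0) hi0le hi0ne
  have hdle : dS ≤ ns := Nat.findGreatest_le (P := fun δ => αe δ ≠ 0) ns
  have hdgt : ∀ δ, dS < δ → αe δ = 0 := by
    intro δ hδ
    by_cases hδ2 : δ ≤ ns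
    · by_contra hne
      exact (Nat.findGreatest_is_greatest (P := fun δ => αe δ ≠ 0) hδ hδ2) hne
    · simp [hαe]; intro h; omega
  -- the combined left-annihilator of the deep Hankel matrix
  set ζe : ℕ → Fin q → ℝ := fun m =>
    (∑ δ ∈ range (ns+1), if δ ≤ m ∧ m - δ < L then αe δ • ηe (m - δ) else 0)
    + (∑ δ ∈ range (ns+1), if m < δ then αe δ • (β ᵥ* ((A ^ (δ - 1 - m)) * B)) else 0)
    with hζe
  -- the key relation R
  have R : ∀ j δ, δ ≤ ns → j ≤ T - (L + ns) →
      (∑ k ∈ range L, ηe k ⬝ᵥ ud (k + (j + δ)))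
        + ∑ i ∈ range δ, (β ᵥ* ((A ^ (δ - 1 - i)) * B)) ⬝ᵥ ud (j + i)
        = -((β ᵥ* (A ^ δ)) ⬝ᵥ xd j) := by
    intro j δ hδ hj
    have h1 := hrel (j + δ) (by omega)
    rw [hxdshift j δ (by omega) β] at h1
    linarith
  -- ζ annihilates the deep Hankel matrix
  have Z1 : ∀ j, j ≤ T - (L + ns) →
      ∑ m ∈ range (L + ns), ζe m ⬝ᵥ ud (m + j) = 0 := by
    intro j hj
    have hexp : ∀ m, ζe m ⬝ᵥ ud (m + j)
        = (∑ δ ∈ range (ns+1),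
            (if δ ≤ m ∧ m - δ < L then αe δ • ηe (m - δ) else 0) ⬝ᵥ ud (m + j))
          + (∑ δ ∈ range (ns+1),
            (if m < δ then αe δ • (β ᵥ* ((A ^ (δ - 1 - m)) * B)) else 0) ⬝ᵥ ud (m + j)) := by
      intro m
      rw [hζe]
      simp only [add_dotProduct, sum_dotProduct']
    calc ∑ m ∈ range (L + ns), ζe m ⬝ᵥ ud (m + j)
        = ∑ m ∈ range (L + ns), ((∑ δ ∈ range (ns+1),
            (if δ ≤ m ∧ m - δ < L then αe δ • ηe (m - δ) else 0) ⬝ᵥ ud (m + j))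
          + (∑ δ ∈ range (ns+1),
            (if m < δ then αe δ • (β ᵥ* ((A ^ (δ - 1 - m)) * B)) else 0) ⬝ᵥ ud (m + j))) := by
          exact Finset.sum_congr rfl fun m _ => hexp m
      _ = ∑ δ ∈ range (ns+1), ((∑ m ∈ range (L + ns),
            (if δ ≤ m ∧ m - δ < L then αe δ • ηe (m - δ) else 0) ⬝ᵥ ud (m + j))
          + (∑ m ∈ range (L + ns),
            (if m < δ then αe δ • (β ᵥ* ((A ^ (δ - 1 - m)) * B)) else 0) ⬝ᵥ ud (m + j))) := by
          rw [Finset.sum_add_distrib, Finset.sum_add_distrib]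
          congr 1
          · exact Finset.sum_comm
          · exact Finset.sum_comm
      _ = ∑ δ ∈ range (ns+1), αe δ * (-((β ᵥ* (A ^ δ)) ⬝ᵥ xd j)) := by
          apply Finset.sum_congr rfl
          intro δ hδm
          simp only [Finset.mem_range] at hδm
          have hδ : δ ≤ ns := by omega
          have hS1 : ∑ m ∈ range (L + ns),
              (if δ ≤ m ∧ m - δ < L then αe δ • ηe (m - δ) else 0) ⬝ᵥ ud (m + j)
              = αe δ * ∑ k ∈ range L, ηe k ⬝ᵥ ud (k + (j + δ)) := by
            have hsub : Finset.Ico δ (δ + L) ⊆ range (L + ns) := by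
              intro x hx
              simp only [Finset.mem_Ico, Finset.mem_range] at *
              omega
            rw [← Finset.sum_subset hsub]
            · rw [Finset.sum_Ico_eq_sum_range]
              have : δ + L - δ = L := by omega
              rw [this, Finset.mul_sum]
              apply Finset.sum_congr rfl
              intro k hk
              simp only [Finset.mem_range] at hk
              have hcond : δ ≤ δ + k ∧ δ + k - δ < L := by omega
              rw [if_pos hcond]
              have h1 : δ + k - δ = k := by omega
              have h2 : δ + k + j = k + (j + δ) := by omega
              rw [h1, h2, smul_dotProduct, smul_eq_mul]
            · intro m _ hm
              simp only [Finset.mem_Ico, not_and_or, not_le, not_lt] at hm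
              have : ¬ (δ ≤ m ∧ m - δ < L) := by omega
              rw [if_neg this, zero_dotProduct]
          have hS2 : ∑ m ∈ range (L + ns),
              (if m < δ then αe δ • (β ᵥ* ((A ^ (δ - 1 - m)) * B)) else 0) ⬝ᵥ ud (m + j)
              = αe δ * ∑ i ∈ range δ, (β ᵥ* ((A ^ (δ - 1 - i)) * B)) ⬝ᵥ ud (j + i) := by
            rw [← Finset.sum_subset (Finset.range_subset_range.mpr (by omega : δ ≤ L + ns))]
            · rw [Finset.mul_sum]
              apply Finset.sum_congr rfl
              intro i hi
              simp only [Finset.mem_range] at hi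
              rw [if_pos hi, smul_dotProduct]
              have : i + j = j + i := by omega
              rw [this, smul_eq_mul]
            · intro m _ hm
              simp only [Finset.mem_range, not_lt] at hm
              rw [if_neg (by omega), zero_dotProduct]
          rw [hS1, hS2, ← mul_add, R j δ hδ hj]
      _ = 0 := by
          have : ∑ δ ∈ range (ns+1), αe δ * (-((β ᵥ* (A ^ δ)) ⬝ᵥ xd j))
              = -((∑ δ ∈ range (ns+1), αe δ • (β ᵥ* (A ^ δ))) ⬝ᵥ xd j) := by
            rw [sum_dotProduct', ← Finset.sum_neg_distrib]
            apply Finset.sum_congr rfl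
            intro δ _
            rw [smul_dotProduct, smul_eq_mul]
            ring
          rw [this, hαrel, zero_dotProduct, neg_zero]
  -- ζ vanishes by persistency of excitation
  have hζ : ∀ m, m < L + ns → ζe m = 0 := by
    have hcard : (hankelMat (L + ns) T ud).rank
        = Fintype.card (Fin (L + ns) × Fin q) := by
      rw [hPE]; simp [mul_comm]
    have hker := leftker_of_rank_eq_card (hankelMat (L + ns) T ud) hcard
    have hv : (fun ma : Fin (L + ns) × Fin q => ζe (ma.1 : ℕ) ma.2)
        ᵥ* hankelMat (L + ns) T ud = 0 := by
      funext j
      show (fun ma : Fin (L + ns) × Fin q => ζe (ma.1 : ℕ) ma.2)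
        ⬝ᵥ (fun ma => hankelMat (L + ns) T ud ma j) = 0
      have : (fun ma : Fin (L + ns) × Fin q => ζe (ma.1 : ℕ) ma.2)
          ⬝ᵥ (fun ma => hankelMat (L + ns) T ud ma j)
          = ∑ m ∈ range (L + ns), ζe m ⬝ᵥ ud (m + (j : ℕ)) := by
        rw [dotProduct, Fintype.sum_prod_type,
          ← Fin.sum_univ_eq_sum_range (fun m => ζe m ⬝ᵥ ud (m + (j : ℕ))) (L + ns)]
        rfl
      rw [this]
      exact Z1 (j : ℕ) (by omega)
    have hvz := hker _ hv
    intro m hm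
    funext a
    exact congrFun hvz (⟨m, hm⟩, a)
  -- the η part vanishes
  have key : ∀ jj m, m < L → L ≤ m + jj + 1 → ηe m = 0 := by
    intro jj
    induction jj using Nat.strong_induction_on with
    | _ jj ih =>
      intro m hm hLm
      have hz := hζ (dS + m) (by omega)
      rw [hζe] at hz
      simp only at hz
      have hsum1 : (∑ δ ∈ range (ns+1),
          if δ ≤ dS + m ∧ dS + m - δ < L then αe δ • ηe (dS + m - δ) else 0)
          = αe dS • ηe m := by
        rw [Finset.sum_eq_single_of_mem dS (Finset.mem_range.mpr (by omega))]
        · rw [if_pos ⟨by omega, by omega⟩, show dS + m - dS = m from by omega]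
        · intro δ _ hδne
          rcases lt_or_gt_of_ne hδne with hlt | hgt
          · split_ifs with hc
            · have hm' : dS + m - δ < L := hc.2
              rw [ih (L - 1 - (dS + m - δ)) (by omega) (dS + m - δ) hm' (by omega)]
              simp
            · rfl
          · rw [hdgt δ hgt]
            split_ifs <;> simp
      have hsum2 : (∑ δ ∈ range (ns+1),
          if dS + m < δ then αe δ • (β ᵥ* ((A ^ (δ - 1 - (dS + m))) * B)) else 0) = 0 := by
        apply Finset.sum_eq_zero
        intro δ _
        split_ifs with hc
        · rw [hdgt δ (by omega)]; simp
        · rfl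
      rw [hsum1, hsum2, add_zero] at hz
      exact (smul_eq_zero.mp hz).resolve_left hd0
  have hη : ∀ m, ηe m = 0 := by
    intro m
    by_cases hm : m < L
    · exact key (L - 1 - m) m hm (by omega)
    · exact hηe m (by omega)
  -- the β part: first the powers below dS
  have hβlt : ∀ i, i < dS → β ᵥ* ((A ^ i) * B) = 0 := by
    intro i
    induction i using Nat.strong_induction_on with
    | _ i ih =>
      intro hi
      have hz := hζ (dS - 1 - i) (by omega)
      rw [hζe] at hz
      simp only at hz
      have hsum1 : (∑ δ ∈ range (ns+1),
          if δ ≤ dS - 1 - i ∧ dS - 1 - i - δ < L then αe δ • ηe (dS - 1 - i - δ) else 0)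
          = 0 := by
        apply Finset.sum_eq_zero
        intro δ _
        split_ifs with hc
        · rw [hη]; simp
        · rfl
      have hsum2 : (∑ δ ∈ range (ns+1),
          if dS - 1 - i < δ then αe δ • (β ᵥ* ((A ^ (δ - 1 - (dS - 1 - i))) * B)) else 0)
          = αe dS • (β ᵥ* ((A ^ i) * B)) := by
        rw [Finset.sum_eq_single_of_mem dS (Finset.mem_range.mpr (by omega))]
        · rw [if_pos (by omega), show dS - 1 - (dS - 1 - i) = i from by omega]
        · intro δ _ hδne
          rcases lt_or_gt_of_ne hδne with hlt | hgt
          · split_ifs with hc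
            · rw [ih (δ - 1 - (dS - 1 - i)) (by omega) (by omega)]
              simp
            · rfl
          · rw [hdgt δ hgt]
            split_ifs <;> simp
      rw [hsum1, hsum2, zero_add] at hz
      exact (smul_eq_zero.mp hz).resolve_left hd0
  -- the recursion extending to all powers
  have hsplit : ∑ δ ∈ range (dS+1), αe δ • (β ᵥ* (A ^ δ)) = 0 := by
    rw [← hαrel]
    apply Finset.sum_subset (Finset.range_subset_range.mpr (Nat.succ_le_succ hdle))
    intro δ hδ1 hδ2
    simp only [Finset.mem_range] at hδ1 hδ2
    rw [hdgt δ (by omega)]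
    simp
  have hAd : αe dS • (β ᵥ* (A ^ dS)) = ∑ δ ∈ range dS, (-(αe δ)) • (β ᵥ* (A ^ δ)) := by
    rw [Finset.sum_range_succ] at hsplit
    have h2 : αe dS • (β ᵥ* (A ^ dS)) = -∑ δ ∈ range dS, αe δ • (β ᵥ* (A ^ δ)) := by
      rw [eq_neg_iff_add_eq_zero, add_comm]
      exact hsplit
    rw [h2, ← Finset.sum_neg_distrib]
    apply Finset.sum_congr rfl
    intro δ _
    rw [neg_smul]
  have hβall : ∀ i, β ᵥ* ((A ^ i) * B) = 0 := by
    intro i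
    induction i using Nat.strong_induction_on with
    | _ i ih =>
      by_cases hi : i < dS
      · exact hβlt i hi
      · push_neg at hi
        have hkey : αe dS • (β ᵥ* ((A ^ i) * B)) = 0 := by
          calc αe dS • (β ᵥ* ((A ^ i) * B))
              = αe dS • (β ᵥ* ((A ^ dS) * ((A ^ (i - dS)) * B))) := by
                rw [← Matrix.mul_assoc, ← pow_add, show dS + (i - dS) = i from by omega]
            _ = (αe dS • (β ᵥ* (A ^ dS))) ᵥ* ((A ^ (i - dS)) * B) := by
                rw [Matrix.smul_vecMul, Matrix.vecMul_vecMul]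
            _ = ∑ δ ∈ range dS, (-(αe δ)) • ((β ᵥ* (A ^ δ)) ᵥ* ((A ^ (i - dS)) * B)) := by
                rw [hAd, sum_vecMul']
                apply Finset.sum_congr rfl
                intro δ _
                rw [Matrix.smul_vecMul]
            _ = ∑ δ ∈ range dS, (-(αe δ)) • (β ᵥ* ((A ^ (δ + (i - dS))) * B)) := by
                apply Finset.sum_congr rfl
                intro δ _
                rw [Matrix.vecMul_vecMul, ← Matrix.mul_assoc, ← pow_add]
            _ = 0 := by
                apply Finset.sum_eq_zero
                intro δ hδ
                simp only [Finset.mem_range] at hδ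
                rw [ih (δ + (i - dS)) (by omega)]
                simp
        exact (smul_eq_zero.mp hkey).resolve_left hd0
  -- conclude β = 0 by controllability
  have hβctrb : β ᵥ* (ctrbMat A B) = 0 := by
    funext kj
    have : (β ᵥ* (ctrbMat A B)) kj = (β ᵥ* ((A ^ (kj.1 : ℕ)) * B)) kj.2 := rfl
    rw [this, hβall]
    rfl
  have hβ0 := leftker_of_rank_eq_card (ctrbMat A B) (by rw [hctrb]; simp) β hβctrb
  exact ⟨hη, hβ0⟩
/-- **Fundamental lemma (existence part).** Suppose `(A, B)` is controllable,
`(u^d, y^d)` is a trajectory of length `T` of `(A, B, C)`, `N ≥ 1`,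
`L = T_ini + N`, `L + ns ≤ T`, and `u^d` is persistently exciting of order
`L + ns` (its Hankel matrix of depth `L + ns` has full row rank `q(L + ns)`).
Then every trajectory `(u, y)` of length `L` of the system can be written as
`(H_L(u^d) g, H_L(y^d) g)` for some `g ∈ ℝ^{T−L+1}`. -/
theorem fundamental_lemma_existence
    {ns q p : ℕ} (A : Matrix (Fin ns) (Fin ns) ℝ) (B : Matrix (Fin ns) (Fin q) ℝ)
    (C : Matrix (Fin p) (Fin ns) ℝ)
    (hctrb : (ctrbMat A B).rank = ns)
    (T Tini N : ℕ) (hN : 1 ≤ N) (hT : Tini + N + ns ≤ T)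
    (ud : ℕ → Fin q → ℝ) (yd : ℕ → Fin p → ℝ)
    (htraj : IsTrajectory A B C T ud yd)
    (hPE : (hankelMat (Tini + N + ns) T ud).rank = q * (Tini + N + ns)) :
    ∀ (u : ℕ → Fin q → ℝ) (y : ℕ → Fin p → ℝ),
      IsTrajectory A B C (Tini + N) u y →
      ∃ g : Fin (T - (Tini + N) + 1) → ℝ,
        (∀ (k : Fin (Tini + N)) (a : Fin q),
          (hankelMat (Tini + N) T ud).mulVec g (k, a) = u (k : ℕ) a) ∧
        (∀ (k : Fin (Tini + N)) (b : Fin p),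
          (hankelMat (Tini + N) T yd).mulVec g (k, b) = y (k : ℕ) b) := by
  classical
  intro u y hu
  obtain ⟨x, hx⟩ := hu
  obtain ⟨xd, hxd⟩ := htraj
  set L := Tini + N with hLdef
  have hL1 : 1 ≤ L := by omega
  have hxrec : ∀ k < T, xd (k+1) = A.mulVec (xd k) + B.mulVec (ud k) :=
    fun k hk => (hxd k hk).1
  have hydC : ∀ k < T, yd k = C.mulVec (xd k) := fun k hk => (hxd k hk).2
  have hxrec' : ∀ k < L, x (k+1) = A.mulVec (x k) + B.mulVec (u k) :=
    fun k hk => (hx k hk).1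
  have hyC : ∀ k < L, y k = C.mulVec (x k) := fun k hk => (hx k hk).2
  have hxdshift : ∀ j δ, j + δ ≤ T → ∀ β : Fin ns → ℝ,
      β ⬝ᵥ xd (j + δ) = (β ᵥ* (A ^ δ)) ⬝ᵥ xd j
        + ∑ i ∈ range δ, (β ᵥ* ((A ^ (δ - 1 - i)) * B)) ⬝ᵥ ud (j + i) := by
    intro j δ hjd β
    have h1 : xd (j + δ) = stSeq A B (xd j) (fun i => ud (j + i)) δ :=
      stSeq_of_traj A B T xd ud hxrec j δ hjd
    rw [h1, stSeq_unfold, dotProduct_add, Matrix.dotProduct_mulVec, dotProduct_sum']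
    congr 1
    apply Finset.sum_congr rfl
    intro i _
    rw [Matrix.dotProduct_mulVec]
  set M : Matrix ((Fin L × Fin q) ⊕ Fin ns) (Fin (T - L + 1)) ℝ :=
    Matrix.of fun r j => Sum.rec (fun ia => ud ((ia.1 : ℕ) + (j : ℕ)) ia.2)
      (fun i => xd (j : ℕ) i) r with hM
  have hker : ∀ w : ((Fin L × Fin q) ⊕ Fin ns) → ℝ, w ᵥ* M = 0 → w = 0 := by
    intro w hw
    set ηe : ℕ → Fin q → ℝ :=
      fun k a => if h : k < L then w (Sum.inl (⟨k, h⟩, a)) else 0 with hηdef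
    set β : Fin ns → ℝ := fun i => w (Sum.inr i) with hβdef
    have hηe : ∀ m, L ≤ m → ηe m = 0 := by
      intro m hm
      funext a
      simp only [hηdef]
      rw [dif_neg (by omega)]
      rfl
    have hrel : ∀ j, j ≤ T - L →
        (∑ k ∈ range L, ηe k ⬝ᵥ ud (k + j)) + β ⬝ᵥ xd j = 0 := by
      intro j hj
      have h0 := congrFun hw ⟨j, by omega⟩
      have h1 : (w ᵥ* M) ⟨j, by omega⟩
          = (∑ k ∈ range L, ηe k ⬝ᵥ ud (k + j)) + β ⬝ᵥ xd j := by
        show ∑ r, w r * M r ⟨j, by omega⟩ = _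
        rw [Fintype.sum_sum_type]
        congr 1
        · rw [Fintype.sum_prod_type,
            ← Fin.sum_univ_eq_sum_range (fun k => ηe k ⬝ᵥ ud (k + j)) L]
          apply Finset.sum_congr rfl
          intro k _
          rw [dotProduct]
          apply Finset.sum_congr rfl
          intro a _
          simp only [hηdef]
          rw [dif_pos k.isLt]
          rfl
      rw [h1] at h0
      simpa using h0
    obtain ⟨hη0, hβ0⟩ := kernel_lemma A B hctrb hL1 hT ud xd hxdshift hPE ηe hηe β hrel
    funext r
    cases r with
    | inl ia =>
      have h2 := congrFun (hη0 (ia.1 : ℕ)) ia.2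
      simp only [hηdef] at h2
      rw [dif_pos ia.1.isLt] at h2
      simpa using h2
    | inr i => exact congrFun hβ0 i
  obtain ⟨g, hg⟩ := surjective_mulVec_of_leftker M hker
    (Sum.elim (fun ka : Fin L × Fin q => u (ka.1 : ℕ) ka.2) (x 0))
  have hgu : ∀ (k : Fin L) (a : Fin q),
      (∑ j : Fin (T - L + 1), ud ((k : ℕ) + (j : ℕ)) a * g j) = u (k : ℕ) a :=
    fun k a => congrFun hg (Sum.inl (k, a))
  have hgx : ∀ i, (∑ j : Fin (T - L + 1), xd (j : ℕ) i * g j) = x 0 i :=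
    fun i => congrFun hg (Sum.inr i)
  refine ⟨g, ?_, ?_⟩
  · intro k a
    exact hgu k a
  · have hx0 : ∑ j : Fin (T - L + 1), g j • xd (j : ℕ) = x 0 := by
      funext i
      rw [Finset.sum_apply, ← hgx i]
      apply Finset.sum_congr rfl
      intro j _
      simp [mul_comm]
    have huu : ∀ t, t < L → (∑ j : Fin (T - L + 1), g j • ud ((j : ℕ) + t)) = u t := by
      intro t ht
      funext a
      rw [Finset.sum_apply, ← hgu ⟨t, ht⟩ a]
      apply Finset.sum_congr rfl
      intro j _
      simp [mul_comm, add_comm]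
    intro k b
    have hyd' : ∀ j : Fin (T - L + 1), yd ((k : ℕ) + (j : ℕ))
        = C.mulVec (xd ((k : ℕ) + (j : ℕ))) := by
      intro j
      exact hydC _ (by have h3 := j.isLt; have h4 := k.isLt; omega)
    have step1 : (hankelMat L T yd).mulVec g (k, b)
        = ∑ j : Fin (T - L + 1), (C.mulVec (xd ((k : ℕ) + (j : ℕ)))) b * g j := by
      show ∑ j : Fin (T - L + 1), yd ((k : ℕ) + (j : ℕ)) b * g j = _
      apply Finset.sum_congr rfl
      intro j _
      rw [hyd' j]
    have step2 : ∑ j : Fin (T - L + 1), (C.mulVec (xd ((k : ℕ) + (j : ℕ)))) b * g j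
        = (C.mulVec (∑ j : Fin (T - L + 1), g j • xd ((k : ℕ) + (j : ℕ)))) b := by
      rw [mulVec_sum', Finset.sum_apply]
      apply Finset.sum_congr rfl
      intro j _
      simp [mul_comm]
    have step3 : ∑ j : Fin (T - L + 1), g j • xd ((k : ℕ) + (j : ℕ)) = x (k : ℕ) := by
      have e1 : ∀ j : Fin (T - L + 1), xd ((k : ℕ) + (j : ℕ))
          = stSeq A B (xd (j : ℕ)) (fun i => ud ((j : ℕ) + i)) (k : ℕ) := by
        intro j
        rw [show (k : ℕ) + (j : ℕ) = (j : ℕ) + (k : ℕ) from by omega]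
        exact stSeq_of_traj A B T xd ud hxrec (j : ℕ) (k : ℕ)
          (by have h3 := j.isLt; have h4 := k.isLt; omega)
      calc ∑ j : Fin (T - L + 1), g j • xd ((k : ℕ) + (j : ℕ))
          = ∑ j : Fin (T - L + 1),
              g j • stSeq A B (xd (j : ℕ)) (fun i => ud ((j : ℕ) + i)) (k : ℕ) := by
            apply Finset.sum_congr rfl
            intro j _
            rw [e1 j]
        _ = stSeq A B (∑ j : Fin (T - L + 1), g j • xd (j : ℕ))
              (fun t => ∑ j : Fin (T - L + 1), g j • ud ((j : ℕ) + t)) (k : ℕ) := by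
            rw [stSeq_linear]
        _ = stSeq A B (x 0) u (k : ℕ) := by
            rw [hx0]
            apply stSeq_congr
            intro i hi
            exact huu i (by have h4 := k.isLt; omega)
        _ = x (k : ℕ) := by
            have h5 := stSeq_of_traj A B L x u hxrec' 0 (k : ℕ)
              (by have h4 := k.isLt; omega)
            simp only [zero_add] at h5
            exact h5.symm
    rw [step1, step2, step3, ← hyC (k : ℕ) k.isLt]
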